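/- Let β > 0 and λ > 0. Define y : (0,∞) → ℝ by y(x) := √x · K(1/(β+2), (2√λ/(β+2))·x^((β+2)/2)), where K(ν,z) := ∫₀^∞ exp(−z·cosh t)·cosh(ν·t) dt. Then y is twice differentiable on (0,∞) and satisfies y″(x) = λ·x^β·y(x) for every x > 0. -/

import Mathlib

open Set

/-- Modified Bessel function of the second kind (integral representation):
`K(ν, z) = ∫₀^∞ exp(−z cosh t) cosh(ν t) dt`. -/
noncomputable def besselK (ν z : ℝ) : ℝ :=
  ∫ t in Set.Ioi (0 : ℝ), Real.exp (-z * Real.cosh t) * Real.cosh (ν * t)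

open Set Real MeasureTheory Filter Topology

lemma my_cosh_le_exp {t : ℝ} (ht : 0 ≤ t) : Real.cosh t ≤ Real.exp t := by
  rw [Real.cosh_eq]
  have h1 : Real.exp (-t) ≤ Real.exp t := Real.exp_le_exp.mpr (by linarith)
  linarith

lemma my_exp_le_cosh (t : ℝ) : Real.exp t / 2 ≤ Real.cosh t := by
  rw [Real.cosh_eq]
  have := Real.exp_pos (-t)
  linarith

lemma my_cosh_nu_le {ν t : ℝ} (ht : 0 ≤ t) : Real.cosh (ν * t) ≤ Real.exp (|ν| * t) := by
  rw [← Real.cosh_abs, abs_mul, abs_of_nonneg ht]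
  exact my_cosh_le_exp (by positivity)

/-- Key decay bound. -/
lemma aux_bound (a b : ℝ) (ha : 0 < a) :
    ∃ C : ℝ, 0 ≤ C ∧ ∀ t : ℝ, 0 ≤ t →
      Real.exp (b * t) * Real.exp (-a * Real.cosh t) ≤ C * Real.exp (-t) := by
  obtain ⟨n, hn⟩ := exists_nat_ge (b + 1)
  refine ⟨(n.factorial : ℝ) * (2 / a) ^ n, by positivity, fun t ht => ?_⟩
  have h1 : a * Real.exp t / 2 ≤ a * Real.cosh t := by
    have := my_exp_le_cosh t
    nlinarith
  have h2 : Real.exp (-a * Real.cosh t) ≤ Real.exp (-(a * Real.exp t / 2)) := by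
    apply Real.exp_le_exp.mpr; linarith
  have h3 : (a * Real.exp t / 2) ^ n / n.factorial ≤ Real.exp (a * Real.exp t / 2) := by
    have hx : (0:ℝ) ≤ a * Real.exp t / 2 := by positivity
    calc (a * Real.exp t / 2) ^ n / n.factorial
        ≤ ∑ i ∈ Finset.range (n + 1), (a * Real.exp t / 2) ^ i / i.factorial := by
          exact Finset.single_le_sum (f := fun i => (a * Real.exp t / 2) ^ i / (i.factorial : ℝ))
            (fun i _ => by positivity) (Finset.self_mem_range_succ n)
      _ ≤ Real.exp (a * Real.exp t / 2) := Real.sum_le_exp_of_nonneg hx _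
  -- exp(-(a e^t/2)) ≤ n! (2/a)^n exp(-n t)
  have h4 : Real.exp (-(a * Real.exp t / 2)) ≤ (n.factorial : ℝ) * (2 / a) ^ n * Real.exp (-(n:ℝ) * t) := by
    rw [Real.exp_neg]
    rw [inv_le_iff_one_le_mul₀ (Real.exp_pos _)] at *
    · have h5 : (a * Real.exp t / 2) ^ n / n.factorial * ((n.factorial : ℝ) * (2 / a) ^ n * Real.exp (-(n:ℝ) * t))
          = 1 := by
        have key : (a * Real.exp t / 2) ^ n * (2 / a) ^ n = Real.exp t ^ n := by
          rw [← mul_pow]; congr 1; field_simp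
        have hE : Real.exp t ^ n * Real.exp (-(n:ℝ) * t) = 1 := by
          rw [← Real.exp_nat_mul, ← Real.exp_add]; simp
        have hfn : (n.factorial : ℝ) ≠ 0 := by positivity
        calc (a * Real.exp t / 2) ^ n / n.factorial
              * ((n.factorial : ℝ) * (2 / a) ^ n * Real.exp (-(n:ℝ) * t))
            = ((a * Real.exp t / 2) ^ n * (2 / a) ^ n) * Real.exp (-(n:ℝ) * t)
              * ((n.factorial : ℝ) / n.factorial) := by ring
          _ = Real.exp t ^ n * Real.exp (-(n:ℝ) * t) * 1 := by rw [key, div_self hfn]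
          _ = 1 := by rw [mul_one, hE]
      calc (1:ℝ) = (a * Real.exp t / 2) ^ n / n.factorial
            * ((n.factorial : ℝ) * (2 / a) ^ n * Real.exp (-(n:ℝ) * t)) := h5.symm
        _ ≤ Real.exp (a * Real.exp t / 2)
            * ((n.factorial : ℝ) * (2 / a) ^ n * Real.exp (-(n:ℝ) * t)) := by
            apply mul_le_mul_of_nonneg_right h3; positivity
        _ = _ := by ring
  calc Real.exp (b * t) * Real.exp (-a * Real.cosh t)
      ≤ Real.exp (b * t) * ((n.factorial : ℝ) * (2 / a) ^ n * Real.exp (-(n:ℝ) * t)) :=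
        mul_le_mul_of_nonneg_left (h2.trans h4) (Real.exp_pos _).le
    _ = (n.factorial : ℝ) * (2 / a) ^ n * Real.exp ((b - n) * t) := by
        rw [show Real.exp (b*t) * ((n.factorial:ℝ) * (2/a)^n * Real.exp (-(n:ℝ)*t))
              = (n.factorial:ℝ)*(2/a)^n * (Real.exp (b*t) * Real.exp (-(n:ℝ)*t)) by ring,
          ← Real.exp_add]
        ring_nf
    _ ≤ (n.factorial : ℝ) * (2 / a) ^ n * Real.exp (-t) := by
        apply mul_le_mul_of_nonneg_left _ (by positivity)
        apply Real.exp_le_exp.mpr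
        nlinarith

/-- Integrability of `cosh^k t · e^{-a cosh t} · cosh(νt)` on `(0,∞)`. -/
lemma aux_integrable (ν a : ℝ) (ha : 0 < a) (k : ℕ) :
    IntegrableOn
      (fun t => Real.cosh t ^ k * (Real.exp (-a * Real.cosh t) * Real.cosh (ν * t)))
      (Ioi (0:ℝ)) := by
  obtain ⟨C, hC0, hC⟩ := aux_bound a (k + |ν|) ha
  have hcont : Continuous fun t : ℝ =>
      Real.cosh t ^ k * (Real.exp (-a * Real.cosh t) * Real.cosh (ν * t)) := by fun_prop
  apply Integrable.mono' ((exp_neg_integrableOn_Ioi 0 one_pos).const_mul C)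
    hcont.aestronglyMeasurable
  filter_upwards [ae_restrict_mem measurableSet_Ioi] with t ht
  have ht0 : (0:ℝ) ≤ t := le_of_lt ht
  have h1 : Real.cosh t ^ k ≤ Real.exp ((k:ℝ) * t) := by
    calc Real.cosh t ^ k ≤ Real.exp t ^ k :=
          pow_le_pow_left₀ (Real.cosh_pos t).le (my_cosh_le_exp ht0) k
      _ = Real.exp ((k:ℝ) * t) := by rw [← Real.exp_nat_mul]
  have h2 : Real.cosh (ν * t) ≤ Real.exp (|ν| * t) := my_cosh_nu_le ht0
  rw [Real.norm_eq_abs, abs_of_nonneg (by positivity)]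
  calc Real.cosh t ^ k * (Real.exp (-a * Real.cosh t) * Real.cosh (ν * t))
      ≤ Real.exp ((k:ℝ) * t) * (Real.exp (-a * Real.cosh t) * Real.exp (|ν| * t)) := by
        have e1 := (Real.exp_pos (-a * Real.cosh t)).le
        have c1 := (Real.cosh_pos t).le
        have c2 := (Real.cosh_pos (ν * t)).le
        have p1 : (0:ℝ) ≤ Real.cosh t ^ k := by positivity
        nlinarith [Real.exp_pos ((k:ℝ) * t), mul_le_mul h1 h2 c2 (Real.exp_pos ((k:ℝ)*t)).le]
    _ = Real.exp (((k:ℝ) + |ν|) * t) * Real.exp (-a * Real.cosh t) := by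
        rw [show Real.exp ((k:ℝ)*t) * (Real.exp (-a * Real.cosh t) * Real.exp (|ν| * t))
              = (Real.exp ((k:ℝ)*t) * Real.exp (|ν| * t)) * Real.exp (-a*Real.cosh t) by ring,
          ← Real.exp_add]
        congr 2
        ring
    _ ≤ C * Real.exp (-t) := hC t ht0
    _ = C * Real.exp (-1 * t) := by norm_num

noncomputable def besselK1 (ν z : ℝ) : ℝ :=
  ∫ t in Set.Ioi (0 : ℝ), -(Real.cosh t * (Real.exp (-z * Real.cosh t) * Real.cosh (ν * t)))

noncomputable def besselK2 (ν z : ℝ) : ℝ :=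
  ∫ t in Set.Ioi (0 : ℝ), Real.cosh t ^ 2 * (Real.exp (-z * Real.cosh t) * Real.cosh (ν * t))

lemma hasDerivAt_besselK0 (ν : ℝ) {z : ℝ} (hz : 0 < z) :
    HasDerivAt (besselK ν) (besselK1 ν z) z := by
  have h := hasDerivAt_integral_of_dominated_loc_of_deriv_le
    (F := fun w t => Real.exp (-w * Real.cosh t) * Real.cosh (ν * t))
    (F' := fun w t => -(Real.cosh t * (Real.exp (-w * Real.cosh t) * Real.cosh (ν * t))))
    (x₀ := z) (s := Metric.ball z (z / 2))
    (μ := volume.restrict (Ioi 0))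
    (bound := fun t => Real.cosh t ^ 1 * (Real.exp (-(z/2) * Real.cosh t) * Real.cosh (ν * t)))
    (Metric.ball_mem_nhds z (by positivity))
    (Eventually.of_forall fun w => Continuous.aestronglyMeasurable (by fun_prop))
    (by have h := aux_integrable ν z hz 0; simp only [pow_zero, one_mul] at h; exact h)
    (Continuous.aestronglyMeasurable (by fun_prop))
    ?_ (aux_integrable ν (z/2) (by positivity) 1) ?_
  · exact h.2
  · filter_upwards [ae_restrict_mem measurableSet_Ioi] with t ht
    intro w hw
    rw [Metric.mem_ball, Real.dist_eq] at hw
    have hw2 : z / 2 < w := by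
      have := abs_lt.mp hw; linarith
    rw [Real.norm_eq_abs, abs_neg, abs_of_nonneg (by positivity), pow_one]
    have hder : Real.exp (-w * Real.cosh t) ≤ Real.exp (-(z/2) * Real.cosh t) := by
      apply Real.exp_le_exp.mpr
      nlinarith [Real.cosh_pos t]
    exact mul_le_mul_of_nonneg_left
      (mul_le_mul_of_nonneg_right hder (Real.cosh_pos (ν * t)).le) (Real.cosh_pos t).le
  · refine Eventually.of_forall fun t => fun w hw => ?_
    have h1 : HasDerivAt (fun w : ℝ => -w * Real.cosh t) (-1 * Real.cosh t) w :=
      (hasDerivAt_id w).neg.mul_const (Real.cosh t)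
    have h3 := (h1.exp).mul_const (Real.cosh (ν * t))
    exact h3.congr_deriv (by ring)

lemma hasDerivAt_besselK1 (ν : ℝ) {z : ℝ} (hz : 0 < z) :
    HasDerivAt (besselK1 ν) (besselK2 ν z) z := by
  have h := hasDerivAt_integral_of_dominated_loc_of_deriv_le
    (F := fun w t => -(Real.cosh t * (Real.exp (-w * Real.cosh t) * Real.cosh (ν * t))))
    (F' := fun w t => Real.cosh t ^ 2 * (Real.exp (-w * Real.cosh t) * Real.cosh (ν * t)))
    (x₀ := z) (s := Metric.ball z (z / 2))
    (μ := volume.restrict (Ioi 0))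
    (bound := fun t => Real.cosh t ^ 2 * (Real.exp (-(z/2) * Real.cosh t) * Real.cosh (ν * t)))
    (Metric.ball_mem_nhds z (by positivity))
    (Eventually.of_forall fun w => Continuous.aestronglyMeasurable (by fun_prop))
    (by have h := (aux_integrable ν z hz 1).neg; simp only [pow_one] at h; exact h)
    (Continuous.aestronglyMeasurable (by fun_prop))
    ?_ (aux_integrable ν (z/2) (by positivity) 2) ?_
  · exact h.2
  · filter_upwards [ae_restrict_mem measurableSet_Ioi] with t ht
    intro w hw
    rw [Metric.mem_ball, Real.dist_eq] at hw
    have hw2 : z / 2 < w := by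
      have := abs_lt.mp hw; linarith
    rw [Real.norm_eq_abs, abs_of_nonneg (by positivity)]
    have hder : Real.exp (-w * Real.cosh t) ≤ Real.exp (-(z/2) * Real.cosh t) := by
      apply Real.exp_le_exp.mpr
      nlinarith [Real.cosh_pos t]
    exact mul_le_mul_of_nonneg_left
      (mul_le_mul_of_nonneg_right hder (Real.cosh_pos (ν * t)).le) (by positivity)
  · refine Eventually.of_forall fun t => fun w hw => ?_
    have h1 : HasDerivAt (fun w : ℝ => -w * Real.cosh t) (-1 * Real.cosh t) w :=
      (hasDerivAt_id w).neg.mul_const (Real.cosh t)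
    have h3 := (((h1.exp).mul_const (Real.cosh (ν * t))).const_mul (Real.cosh t)).neg
    exact h3.congr_deriv (by ring)

lemma my_sinh_le_exp {t : ℝ} : Real.sinh t ≤ Real.exp t := by
  rw [Real.sinh_eq]
  have := Real.exp_pos (-t)
  have := Real.exp_pos t
  linarith

lemma my_abs_sinh_le {ν t : ℝ} (ht : 0 ≤ t) : |Real.sinh (ν * t)| ≤ Real.exp (|ν| * t) := by
  rw [Real.abs_sinh, abs_mul, abs_of_nonneg ht]
  exact my_sinh_le_exp

lemma bessel_ode (ν : ℝ) {z : ℝ} (hz : 0 < z) :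
    z ^ 2 * besselK2 ν z + z * besselK1 ν z - (z ^ 2 + ν ^ 2) * besselK ν z = 0 := by
  set F : ℝ → ℝ := fun t =>
    -(Real.exp (-z * Real.cosh t) *
      (z * Real.sinh t * Real.cosh (ν * t) + ν * Real.sinh (ν * t))) with hF
  set G : ℝ → ℝ := fun t =>
    z ^ 2 * (Real.cosh t ^ 2 * (Real.exp (-z * Real.cosh t) * Real.cosh (ν * t)))
      + z * (-(Real.cosh t * (Real.exp (-z * Real.cosh t) * Real.cosh (ν * t))))
      - (z ^ 2 + ν ^ 2) * (Real.exp (-z * Real.cosh t) * Real.cosh (ν * t)) with hG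
  have i0 : IntegrableOn (fun t => Real.exp (-z * Real.cosh t) * Real.cosh (ν * t)) (Ioi (0:ℝ)) := by
    simpa using aux_integrable ν z hz 0
  have i1 : IntegrableOn
      (fun t => -(Real.cosh t * (Real.exp (-z * Real.cosh t) * Real.cosh (ν * t)))) (Ioi (0:ℝ)) := by
    have h := (aux_integrable ν z hz 1).neg; simp only [pow_one] at h; exact h
  have i2 := aux_integrable ν z hz 2
  have hGint : IntegrableOn G (Ioi (0:ℝ)) :=
    ((i2.const_mul _).add (i1.const_mul _)).sub (i0.const_mul _)
  have hderiv : ∀ t : ℝ, HasDerivAt F (G t) t := by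
    intro t
    have h1 : HasDerivAt (fun t : ℝ => -z * Real.cosh t) (-z * Real.sinh t) t :=
      (Real.hasDerivAt_cosh t).const_mul (-z)
    have hE := h1.exp
    have hc : HasDerivAt (fun t : ℝ => Real.cosh (ν * t)) (Real.sinh (ν * t) * ν) t := by
      have := (Real.hasDerivAt_cosh (ν * t)).comp t ((hasDerivAt_id t).const_mul ν)
      simpa [Function.comp_def] using this
    have hsν : HasDerivAt (fun t : ℝ => Real.sinh (ν * t)) (Real.cosh (ν * t) * ν) t := by
      have := (Real.hasDerivAt_sinh (ν * t)).comp t ((hasDerivAt_id t).const_mul ν)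
      simpa [Function.comp_def] using this
    have hin := (((Real.hasDerivAt_sinh t).const_mul z).mul hc).add (hsν.const_mul ν)
    have hfin := (hE.mul hin).neg
    refine hfin.congr_deriv (Eq.symm ?_)
    have hs2 := Real.sinh_sq t
    simp only [hG, Pi.add_apply, Pi.mul_apply]
    linear_combination (-(z^2) * Real.exp (-z * Real.cosh t) * Real.cosh (ν * t)) * hs2
  have hF0 : F 0 = 0 := by simp [hF]
  have htend : Tendsto F atTop (𝓝 (0:ℝ)) := by
    obtain ⟨C, hC0, hC⟩ := aux_bound z (1 + |ν|) hz
    apply squeeze_zero_norm' (a := fun t => ((z + |ν|) * C) * Real.exp (-t))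
    · filter_upwards [eventually_ge_atTop (0:ℝ)] with t ht
      have hsn : 0 ≤ Real.sinh t := Real.sinh_nonneg_iff.mpr ht
      have hse : Real.sinh t ≤ Real.exp t := my_sinh_le_exp
      have hcn := my_cosh_nu_le (ν := ν) ht
      have habs := my_abs_sinh_le (ν := ν) ht
      have hcpos := (Real.cosh_pos (ν * t)).le
      have hexp1 : (1:ℝ) ≤ Real.exp t := Real.one_le_exp ht
      have h1 : |z * Real.sinh t * Real.cosh (ν * t) + ν * Real.sinh (ν * t)|
          ≤ (z + |ν|) * (Real.exp t * Real.exp (|ν| * t)) := by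
        calc |z * Real.sinh t * Real.cosh (ν * t) + ν * Real.sinh (ν * t)|
            ≤ |z * Real.sinh t * Real.cosh (ν * t)| + |ν * Real.sinh (ν * t)| := abs_add_le _ _
          _ = z * Real.sinh t * Real.cosh (ν * t) + |ν| * |Real.sinh (ν * t)| := by
              rw [abs_of_nonneg (by positivity), abs_mul]
          _ ≤ (z + |ν|) * (Real.exp t * Real.exp (|ν| * t)) := by
              have e1 : z * Real.sinh t * Real.cosh (ν * t) ≤ z * (Real.exp t * Real.exp (|ν| * t)) := by
                have := mul_le_mul hse hcn hcpos (Real.exp_pos t).le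
                nlinarith
              have e2 : |ν| * |Real.sinh (ν * t)| ≤ |ν| * (Real.exp t * Real.exp (|ν| * t)) := by
                have : |Real.sinh (ν * t)| ≤ Real.exp t * Real.exp (|ν| * t) := by
                  nlinarith [Real.exp_pos (|ν| * t)]
                exact mul_le_mul_of_nonneg_left this (abs_nonneg ν)
              nlinarith
      have hb := hC t ht
      rw [Real.norm_eq_abs, hF, abs_neg, abs_mul, Real.abs_exp]
      calc Real.exp (-z * Real.cosh t) * |z * Real.sinh t * Real.cosh (ν * t) + ν * Real.sinh (ν * t)|
          ≤ Real.exp (-z * Real.cosh t) * ((z + |ν|) * (Real.exp t * Real.exp (|ν| * t))) := by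
            exact mul_le_mul_of_nonneg_left h1 (Real.exp_pos _).le
        _ = (z + |ν|) * (Real.exp ((1 + |ν|) * t) * Real.exp (-z * Real.cosh t)) := by
            have he : Real.exp ((1 + |ν|) * t) = Real.exp t * Real.exp (|ν| * t) := by
              rw [← Real.exp_add]; congr 1; ring
            rw [he]; ring
        _ ≤ ((z + |ν|) * C) * Real.exp (-t) := by
            rw [mul_assoc]
            apply mul_le_mul_of_nonneg_left hb (by positivity)
    · have := Real.tendsto_exp_neg_atTop_nhds_zero.const_mul ((z + |ν|) * C)
      simpa using this
  have key := integral_Ioi_of_hasDerivAt_of_tendsto' (a := 0) (f := F) (f' := G)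
    (fun x _ => hderiv x) hGint htend
  rw [hF0, sub_zero] at key
  have expand : ∫ t in Ioi (0:ℝ), G t
      = z ^ 2 * besselK2 ν z + z * besselK1 ν z - (z ^ 2 + ν ^ 2) * besselK ν z := by
    unfold besselK2 besselK1 besselK
    show (∫ t in Ioi (0:ℝ),
        (z ^ 2 * (Real.cosh t ^ 2 * (Real.exp (-z * Real.cosh t) * Real.cosh (ν * t)))
          + z * (-(Real.cosh t * (Real.exp (-z * Real.cosh t) * Real.cosh (ν * t))))
          - (z ^ 2 + ν ^ 2) * (Real.exp (-z * Real.cosh t) * Real.cosh (ν * t)))) = _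
    have ia2 : IntegrableOn (fun t => z ^ 2 *
        (Real.cosh t ^ 2 * (Real.exp (-z * Real.cosh t) * Real.cosh (ν * t)))) (Ioi (0:ℝ)) :=
      i2.const_mul _
    have ia1 : IntegrableOn (fun t => z *
        (-(Real.cosh t * (Real.exp (-z * Real.cosh t) * Real.cosh (ν * t))))) (Ioi (0:ℝ)) :=
      i1.const_mul _
    have ia0 : IntegrableOn (fun t => (z ^ 2 + ν ^ 2) *
        (Real.exp (-z * Real.cosh t) * Real.cosh (ν * t))) (Ioi (0:ℝ)) :=
      i0.const_mul _
    have iadd : IntegrableOn (fun t =>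
        z ^ 2 * (Real.cosh t ^ 2 * (Real.exp (-z * Real.cosh t) * Real.cosh (ν * t)))
          + z * (-(Real.cosh t * (Real.exp (-z * Real.cosh t) * Real.cosh (ν * t)))))
        (Ioi (0:ℝ)) := ia2.add ia1
    rw [MeasureTheory.integral_sub iadd ia0,
      MeasureTheory.integral_add ia2 ia1,
      MeasureTheory.integral_const_mul, MeasureTheory.integral_const_mul,
      MeasureTheory.integral_const_mul]
  rw [← expand, key]

/-- for `β > 0`, `λ > 0`, the function
`y(x) = √x · K(1/(β+2), (2√λ/(β+2)) x^((β+2)/2))` is twice differentiable on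
`(0,∞)` and solves `y″ = λ x^β y` there. -/
theorem stmt4 (β lam : ℝ) (hβ : 0 < β) (hlam : 0 < lam) :
    ∃ y' : ℝ → ℝ,
      (∀ x ∈ Ioi (0 : ℝ),
        HasDerivAt (fun x : ℝ =>
          Real.sqrt x *
            besselK (1 / (β + 2)) (2 * Real.sqrt lam / (β + 2) * x ^ ((β + 2) / 2)))
          (y' x) x) ∧
      (∀ x ∈ Ioi (0 : ℝ),
        HasDerivAt y'
          (lam * x ^ β *
            (Real.sqrt x *
              besselK (1 / (β + 2)) (2 * Real.sqrt lam / (β + 2) * x ^ ((β + 2) / 2))))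
          x) := by
  have hb2 : (0:ℝ) < β + 2 := by linarith
  have hsl : 0 < Real.sqrt lam := Real.sqrt_pos.mpr hlam
  have hll : Real.sqrt lam * Real.sqrt lam = lam := Real.mul_self_sqrt hlam.le
  set ν : ℝ := 1 / (β + 2) with hν
  set c : ℝ := 2 * Real.sqrt lam / (β + 2) with hc
  set p : ℝ := (β + 2) / 2 with hp
  have hcpos : 0 < c := div_pos (by positivity) hb2
  have hcp : c * p = Real.sqrt lam := by
    rw [hc, hp]; field_simp
  refine ⟨fun w => 1/2 * w ^ (-(1:ℝ)/2) * besselK ν (c * w ^ p)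
      + Real.sqrt lam * w ^ ((β+1)/2) * besselK1 ν (c * w ^ p), ?_, ?_⟩
  · -- first derivative
    intro x hx
    have hx0 : (0:ℝ) < x := hx
    have hxne : x ≠ 0 := hx0.ne'
    have hzpos : 0 < c * x ^ p := mul_pos hcpos (Real.rpow_pos_of_pos hx0 p)
    have hg : HasDerivAt (fun w : ℝ => c * w ^ p) (c * (p * x ^ (p - 1))) x :=
      (Real.hasDerivAt_rpow_const (Or.inl hxne)).const_mul c
    have hKg : HasDerivAt (fun w : ℝ => besselK ν (c * w ^ p))
        (besselK1 ν (c * x ^ p) * (c * (p * x ^ (p - 1)))) x :=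
      (hasDerivAt_besselK0 ν hzpos).comp (h₂ := besselK ν) x hg
    have hfun : (fun x : ℝ => Real.sqrt x * besselK ν (c * x ^ p))
        = (fun x : ℝ => x ^ ((1:ℝ)/2) * besselK ν (c * x ^ p)) :=
      funext fun w => by rw [Real.sqrt_eq_rpow]
    rw [hfun]
    have hs : HasDerivAt (fun w : ℝ => w ^ ((1:ℝ)/2)) ((1:ℝ)/2 * x ^ ((1:ℝ)/2 - 1)) x :=
      Real.hasDerivAt_rpow_const (Or.inl hxne)
    have hy := hs.mul hKg
    have e2 : x ^ ((1:ℝ)/2) * x ^ (p - 1) = x ^ ((β+1)/2) := by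
      rw [← Real.rpow_add hx0]; congr 1; rw [hp]; ring
    have e1 : x ^ ((1:ℝ)/2 - 1) = x ^ (-(1:ℝ)/2) := by norm_num
    have hEq : (1:ℝ)/2 * x ^ ((1:ℝ)/2 - 1) * besselK ν (c * x ^ p)
        + x ^ ((1:ℝ)/2) * (besselK1 ν (c * x ^ p) * (c * (p * x ^ (p - 1))))
        = 1/2 * x ^ (-(1:ℝ)/2) * besselK ν (c * x ^ p)
          + Real.sqrt lam * x ^ ((β+1)/2) * besselK1 ν (c * x ^ p) := by
      rw [e1]
      linear_combination besselK1 ν (c * x ^ p) * x ^ ((1:ℝ)/2) * x ^ (p-1) * hcp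
        + besselK1 ν (c * x ^ p) * Real.sqrt lam * e2
    have hres : HasDerivAt (fun x : ℝ => x ^ ((1:ℝ)/2) * besselK ν (c * x ^ p))
        (1/2 * x ^ (-(1:ℝ)/2) * besselK ν (c * x ^ p)
          + Real.sqrt lam * x ^ ((β+1)/2) * besselK1 ν (c * x ^ p)) x := hEq ▸ hy
    exact hres
  · -- second derivative
    intro x hx
    have hx0 : (0:ℝ) < x := hx
    have hxne : x ≠ 0 := hx0.ne'
    have hzpos : 0 < c * x ^ p := mul_pos hcpos (Real.rpow_pos_of_pos hx0 p)
    have hg : HasDerivAt (fun w : ℝ => c * w ^ p) (c * (p * x ^ (p - 1))) x :=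
      (Real.hasDerivAt_rpow_const (Or.inl hxne)).const_mul c
    have hKg : HasDerivAt (fun w : ℝ => besselK ν (c * w ^ p))
        (besselK1 ν (c * x ^ p) * (c * (p * x ^ (p - 1)))) x :=
      (hasDerivAt_besselK0 ν hzpos).comp (h₂ := besselK ν) x hg
    have hK1g : HasDerivAt (fun w : ℝ => besselK1 ν (c * w ^ p))
        (besselK2 ν (c * x ^ p) * (c * (p * x ^ (p - 1)))) x :=
      (hasDerivAt_besselK1 ν hzpos).comp (h₂ := besselK1 ν) x hg
    have hA := ((Real.hasDerivAt_rpow_const (p := -(1:ℝ)/2) (Or.inl hxne)).const_mul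
      ((1:ℝ)/2)).mul hKg
    have hB := ((Real.hasDerivAt_rpow_const (p := (β+1)/2) (Or.inl hxne)).const_mul
      (Real.sqrt lam)).mul hK1g
    have hE := hA.add hB
    have hode := bessel_ode ν hzpos
    have hEq : lam * x ^ β * (Real.sqrt x * besselK ν (c * x ^ p))
        = 1/2 * (-(1:ℝ)/2 * x ^ (-(1:ℝ)/2 - 1)) * besselK ν (c * x ^ p)
          + 1/2 * x ^ (-(1:ℝ)/2) * (besselK1 ν (c * x ^ p) * (c * (p * x ^ (p - 1))))
          + (Real.sqrt lam * ((β+1)/2 * x ^ ((β+1)/2 - 1)) * besselK1 ν (c * x ^ p)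
            + Real.sqrt lam * x ^ ((β+1)/2) * (besselK2 ν (c * x ^ p) * (c * (p * x ^ (p - 1))))) := by
      rw [show lam * x ^ β = Real.sqrt lam * Real.sqrt lam * x ^ β from by rw [hll]]
      rw [Real.sqrt_eq_rpow x]
      set s : ℝ := x ^ ((1:ℝ)/2) with hsdef
      set u : ℝ := x ^ (β/2) with hudef
      have hs0 : 0 < s := Real.rpow_pos_of_pos hx0 _
      have hu0 : 0 < u := Real.rpow_pos_of_pos hx0 _
      have hss : s * s = x := by rw [hsdef, ← Real.rpow_add hx0]; norm_num
      have hsi : s⁻¹ = x ^ (-((1:ℝ)/2)) := by rw [hsdef, ← Real.rpow_neg hx0.le]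
      have h2 : x ^ (-(1:ℝ)/2) = s⁻¹ := by rw [hsi]; congr 1; norm_num
      have h1 : x ^ (-(1:ℝ)/2 - 1) = s⁻¹ * s⁻¹ * s⁻¹ := by
        rw [hsi, ← Real.rpow_add hx0, ← Real.rpow_add hx0]; congr 1; norm_num
      have h3 : x ^ (p - 1) = u := by rw [hudef]; congr 1; rw [hp]; ring
      have h4 : x ^ ((β+1)/2 - 1) = u * s⁻¹ := by
        rw [hudef, hsi, ← Real.rpow_add hx0]; congr 1; ring
      have h5 : x ^ ((β+1)/2) = u * s := by
        rw [hudef, hsdef, ← Real.rpow_add hx0]; congr 1; ring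
      have h6 : x ^ β = u * u := by rw [hudef, ← Real.rpow_add hx0]; congr 1; ring
      have h7 : x ^ p = u * x := by
        rw [hudef, show p = β/2 + 1 from by rw [hp]; ring, Real.rpow_add hx0, Real.rpow_one]
      rw [h1, h2, h3, h4, h5, h6, h7]
      rw [h7] at hode
      have hzne : c * (u * x) ≠ 0 := (mul_pos hcpos (mul_pos hu0 hx0)).ne'
      have hK2 : besselK2 ν (c * (u * x))
          = (((c*(u*x))^2 + ν^2) * besselK ν (c*(u*x)) - (c*(u*x)) * besselK1 ν (c*(u*x)))
            / (c*(u*x))^2 := by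
        rw [eq_div_iff (pow_ne_zero 2 hzne)]
        linear_combination hode
      rw [hK2, ← hss, hν, hc, hp]
      field_simp
      ring_nf
    have hres : HasDerivAt (fun w : ℝ => 1/2 * w ^ (-(1:ℝ)/2) * besselK ν (c * w ^ p)
        + Real.sqrt lam * w ^ ((β+1)/2) * besselK1 ν (c * w ^ p))
        (lam * x ^ β * (Real.sqrt x * besselK ν (c * x ^ p))) x := hEq ▸ hE
    exact hres
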